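/- In QHC, ⊢ (∇α → !q) ↔ (α → !q) and ⊢ (α → !q) ↔ ∇(α → !q), where ∇α := !?α. -/
import Mathlib


/- Problem (intuitionistic) formulas and proposition (classical) formulas of QHC. -/
mutual
inductive PF : Type
  | var : Nat → PF
  | bot : PF
  | and : PF → PF → PF
  | or : PF → PF → PF
  | imp : PF → PF → PF
  | bang : CF → PF
inductive CF : Type
  | var : Nat → CF
  | fls : CF
  | and : CF → CF → CF
  | or : CF → CF → CF
  | imp : CF → CF → CF
  | quest : PF → CF
end

def PF.neg (α : PF) : PF := α.imp PF.bot
def CF.neg (p : CF) : CF := p.imp CF.fls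
def PF.iff (α β : PF) : PF := (α.imp β).and (β.imp α)
def CF.iff (p q : CF) : CF := (p.imp q).and (q.imp p)
def CF.box (p : CF) : CF := CF.quest (PF.bang p)
def PF.nabla (α : PF) : PF := PF.bang (CF.quest α)

/- Derivability in QHC, parameterized by a set `Ax` of extra problem axioms
(used to treat the axiom ¬!0 and its variants uniformly). Intuitionistic logic
on problems, classical logic on propositions, the rules α ⊢ ?α and p ⊢ !p, and
the mixed axioms ?!p → p, α → !?α, !(p→q) → (!p → !q), ?(α→β) → (?α → ?β). -/
mutual
inductive ProvP (Ax : PF → Prop) : PF → Prop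
  | axm {α} : Ax α → ProvP Ax α
  | mp {α β} : ProvP Ax (α.imp β) → ProvP Ax α → ProvP Ax β
  | ak (α β : PF) : ProvP Ax (α.imp (β.imp α))
  | as (α β γ : PF) : ProvP Ax ((α.imp (β.imp γ)).imp ((α.imp β).imp (α.imp γ)))
  | andI (α β : PF) : ProvP Ax (α.imp (β.imp (α.and β)))
  | andE1 (α β : PF) : ProvP Ax ((α.and β).imp α)
  | andE2 (α β : PF) : ProvP Ax ((α.and β).imp β)
  | orI1 (α β : PF) : ProvP Ax (α.imp (α.or β))
  | orI2 (α β : PF) : ProvP Ax (β.imp (α.or β))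
  | orE (α β γ : PF) : ProvP Ax ((α.imp γ).imp ((β.imp γ).imp ((α.or β).imp γ)))
  | exf (α : PF) : ProvP Ax (PF.bot.imp α)
  | bangIntro {p} : ProvC Ax p → ProvP Ax (PF.bang p)
  | bangImp (p q : CF) : ProvP Ax ((PF.bang (p.imp q)).imp ((PF.bang p).imp (PF.bang q)))
  | bangQuest (α : PF) : ProvP Ax (α.imp (PF.bang (CF.quest α)))
inductive ProvC (Ax : PF → Prop) : CF → Prop
  | mp {p q} : ProvC Ax (p.imp q) → ProvC Ax p → ProvC Ax q
  | ak (p q : CF) : ProvC Ax (p.imp (q.imp p))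
  | as (p q r : CF) : ProvC Ax ((p.imp (q.imp r)).imp ((p.imp q).imp (p.imp r)))
  | andI (p q : CF) : ProvC Ax (p.imp (q.imp (p.and q)))
  | andE1 (p q : CF) : ProvC Ax ((p.and q).imp p)
  | andE2 (p q : CF) : ProvC Ax ((p.and q).imp q)
  | orI1 (p q : CF) : ProvC Ax (p.imp (p.or q))
  | orI2 (p q : CF) : ProvC Ax (q.imp (p.or q))
  | orE (p q r : CF) : ProvC Ax ((p.imp r).imp ((q.imp r).imp ((p.or q).imp r)))
  | exf (p : CF) : ProvC Ax (CF.fls.imp p)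
  | lem (p : CF) : ProvC Ax (p.or (p.imp CF.fls))
  | questIntro {α} : ProvP Ax α → ProvC Ax (CF.quest α)
  | questImp (α β : PF) : ProvC Ax ((CF.quest (α.imp β)).imp ((CF.quest α).imp (CF.quest β)))
  | questBang (p : CF) : ProvC Ax ((CF.quest (PF.bang p)).imp p)
end

/-- The axiom (!⊥): ¬!0. -/
def QHCAx : PF → Prop := fun α => α = (PF.bang CF.fls).imp PF.bot

/-- Derivability of a problem in QHC. -/
def PrvP (α : PF) : Prop := ProvP QHCAx α
/-- Derivability of a proposition in QHC. -/
def PrvC (p : CF) : Prop := ProvC QHCAx p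

namespace QHCaux

/-- Hypothetical syllogism. -/
theorem pcomp {Ax : PF → Prop} {a b c : PF} (h1 : ProvP Ax (a.imp b))
    (h2 : ProvP Ax (b.imp c)) : ProvP Ax (a.imp c) :=
  .mp (.mp (.as a b c) (.mp (.ak (b.imp c) a) h2)) h1

/-- Apply a theorem under an implication. -/
theorem papp2 {Ax : PF → Prop} {x y z : PF} (h : ProvP Ax (x.imp (y.imp z)))
    (hy : ProvP Ax y) : ProvP Ax (x.imp z) :=
  .mp (.mp (.as x y z) h) (.mp (.ak y x) hy)

/-- The B combinator. -/
theorem pB (Ax : PF → Prop) (a b c : PF) :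
    ProvP Ax ((b.imp c).imp ((a.imp b).imp (a.imp c))) :=
  pcomp (.ak (b.imp c) a) (.as a b c)

theorem piff {Ax : PF → Prop} {a b : PF} (h1 : ProvP Ax (a.imp b))
    (h2 : ProvP Ax (b.imp a)) : ProvP Ax (a.iff b) :=
  .mp (.mp (.andI _ _) h1) h2

/-- ∇!q → !q. -/
theorem nabla_bang {Ax : PF → Prop} (q : CF) :
    ProvP Ax ((PF.nabla (PF.bang q)).imp (PF.bang q)) :=
  .mp (.bangImp _ _) (.bangIntro (.questBang q))

/-- ∇(α→β) → (∇α → ∇β). -/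
theorem nabla_K {Ax : PF → Prop} (a b : PF) :
    ProvP Ax ((PF.nabla (a.imp b)).imp ((PF.nabla a).imp (PF.nabla b))) :=
  pcomp (.mp (.bangImp _ _) (.bangIntro (.questImp a b))) (.bangImp _ _)

/-- (∇α → !q) → (α → !q). -/
theorem dir1 {Ax : PF → Prop} (a : PF) (q : CF) :
    ProvP Ax (((PF.nabla a).imp (PF.bang q)).imp (a.imp (PF.bang q))) :=
  papp2 (pB Ax a (PF.nabla a) (PF.bang q)) (.bangQuest a)

/-- (∇α → ∇!q) → (∇α → !q). -/
theorem dir2 {Ax : PF → Prop} (a : PF) (q : CF) :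
    ProvP Ax (((PF.nabla a).imp (PF.nabla (PF.bang q))).imp
      ((PF.nabla a).imp (PF.bang q))) :=
  .mp (pB Ax (PF.nabla a) (PF.nabla (PF.bang q)) (PF.bang q)) (nabla_bang q)

end QHCaux

theorem qhc_nabla_imp_bang (α : PF) (q : CF) :
    PrvP (PF.iff ((PF.nabla α).imp (PF.bang q)) (α.imp (PF.bang q))) ∧
    PrvP (PF.iff (α.imp (PF.bang q)) (PF.nabla (α.imp (PF.bang q)))) := by
  open QHCaux in
  refine ⟨piff (dir1 α q) ?_, piff (.bangQuest _) ?_⟩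
  · exact pcomp (ProvP.bangQuest (α.imp (PF.bang q)))
      (pcomp (nabla_K α (PF.bang q)) (dir2 α q))
  · exact pcomp (nabla_K α (PF.bang q)) (pcomp (dir2 α q) (dir1 α q))
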